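/- Let R be a commutative discrete valuation ring with uniformizer π and residue field k = R/(π), and let G be a group. Let L be the abelian group generated by the isomorphism classes of pairs (M, ρ), where M is a finitely generated R-module with π·T(M) = 0 and ρ : G → Aut_R(M) satisfies ρ(1) = id and ρ(gh) ~ ρ(g)ρ(h) for all g, h ∈ G (a lax representation, with isomorphisms and exact sequences taken to be strictly G-equivariant R-linear maps), subject to the relations [B] = [A] + [C] for every strictly G-equivariant short exact sequence 0 → A → B → C → 0. Then for every finite-dimensional k-vector space X, regarded as an R-module, and every group homomorphism ρ : G → Aut_k(X), the class [(X, ρ)] is zero in L. -/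

import Mathlib

/-- The equivalence relation `a ~ b` iff `(a-b)(M) ⊆ πN` and `a - b` vanishes on the
torsion submodule `T(M)`. -/
def LaxRel {R : Type} [CommRing R] (π : R) {M N : Type}
    [AddCommGroup M] [AddCommGroup N] [Module R M] [Module R N]
    (a b : M →ₗ[R] N) : Prop :=
  (∀ x : M, ∃ y : N, a x - b x = π • y) ∧
  (∀ x ∈ Submodule.torsion R M, a x = b x)

/-- An object of the category of lax representations of a group `G` in the category `𝒜`
of finitely generated `R`-modules with `π`-annihilated torsion: a (presented) finitely
generated `R`-module `M` with `π·T(M) = 0` together with `ρ : G → Aut_R(M)` such that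
`ρ(1) = id` and `ρ(gh) ~ ρ(g)ρ(h)` for all `g, h ∈ G`. -/
structure LObj (R : Type) [CommRing R] (π : R) (G : Type) [Group G] where
  n : ℕ
  rels : Submodule R (Fin n → R)
  tors : ∀ x ∈ Submodule.torsion R ((Fin n → R) ⧸ rels), π • x = 0
  ρ : G → ((Fin n → R) ⧸ rels) ≃ₗ[R] ((Fin n → R) ⧸ rels)
  map_one : ρ 1 = LinearEquiv.refl R ((Fin n → R) ⧸ rels)
  lax : ∀ g h : G,
    LaxRel π
      ((ρ (g * h)).toLinearMap : ((Fin n → R) ⧸ rels) →ₗ[R] ((Fin n → R) ⧸ rels))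
      ((ρ g).toLinearMap ∘ₗ (ρ h).toLinearMap)

/-- The underlying module of an object. -/
abbrev LObj.Mdl {R : Type} [CommRing R] {π : R} {G : Type} [Group G]
    (o : LObj R π G) : Type := (Fin o.n → R) ⧸ o.rels

/-- Relations defining the group `L`: `[B] = [A] + [C]` for every strictly
`G`-equivariant short exact sequence `0 → A → B → C → 0`. -/
def LRel (R : Type) [CommRing R] (π : R) (G : Type) [Group G] :
    Set (FreeAbelianGroup (LObj R π G)) :=
  {x | ∃ (a b c : LObj R π G) (f : a.Mdl →ₗ[R] b.Mdl) (g : b.Mdl →ₗ[R] c.Mdl),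
    Function.Injective f ∧ Function.Surjective g ∧
    LinearMap.range f = LinearMap.ker g ∧
    (∀ g₀ : G, f ∘ₗ (a.ρ g₀ : a.Mdl →ₗ[R] a.Mdl) = (b.ρ g₀ : b.Mdl →ₗ[R] b.Mdl) ∘ₗ f) ∧
    (∀ g₀ : G, g ∘ₗ (b.ρ g₀ : b.Mdl →ₗ[R] b.Mdl) = (c.ρ g₀ : c.Mdl →ₗ[R] c.Mdl) ∘ₗ g) ∧
    x = FreeAbelianGroup.of b - FreeAbelianGroup.of a - FreeAbelianGroup.of c}

/-- The abelian group `L` generated by the (isomorphism classes of) lax representations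
of `G` in `𝒜`, modulo the relations coming from strictly `G`-equivariant short exact
sequences. -/
abbrev LGroup (R : Type) [CommRing R] (π : R) (G : Type) [Group G] : Type :=
  FreeAbelianGroup (LObj R π G) ⧸ AddSubgroup.closure (LRel R π G)


section Helpers

set_option linter.unusedSectionVars false
variable {R : Type} [CommRing R] [IsDomain R] [IsDiscreteValuationRing R]
  {π : R} (hπ : Irreducible π) {G : Type} [Group G]

/-- the submodule π·R^m -/
def prel (R : Type) [CommRing R] (π : R) (m : ℕ) : Submodule R (Fin m → R) :=
  Submodule.pi Set.univ fun _ => (Ideal.span {π} : Ideal R)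

lemma mem_prel {m : ℕ} {π : R} {x : Fin m → R} :
    x ∈ prel R π m ↔ ∃ y : Fin m → R, x = π • y := by
  constructor
  · intro h
    choose y hy using fun i => (Ideal.mem_span_singleton').mp (Submodule.mem_pi.mp h i (Set.mem_univ i))
    exact ⟨fun i => y i, funext fun i => by simp [Pi.smul_apply, (hy i).symm, mul_comm]⟩
  · rintro ⟨y, rfl⟩
    exact Submodule.mem_pi.mpr fun i _ => Ideal.mem_span_singleton'.mpr ⟨y i, by simp [mul_comm]⟩

lemma relZero {x : FreeAbelianGroup (LObj R π G)} (hx : x ∈ LRel R π G) :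
    (QuotientAddGroup.mk x : LGroup R π G) = 0 :=
  (QuotientAddGroup.eq_zero_iff x).mpr (AddSubgroup.subset_closure hx)

lemma relClass {a b c : LObj R π G}
    (h : FreeAbelianGroup.of b - FreeAbelianGroup.of a - FreeAbelianGroup.of c ∈ LRel R π G) :
    (QuotientAddGroup.mk (FreeAbelianGroup.of b) : LGroup R π G)
      = QuotientAddGroup.mk (FreeAbelianGroup.of a) + QuotientAddGroup.mk (FreeAbelianGroup.of c) := by
  have := relZero h
  rw [QuotientAddGroup.mk_sub, QuotientAddGroup.mk_sub] at this
  linear_combination (norm := abel_nf) this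

/-- the zero object -/
def zObj (R : Type) [CommRing R] (π : R) (G : Type) [Group G] : LObj R π G where
  n := 0
  rels := ⊥
  tors := fun x _ => by
    haveI : Subsingleton (Fin 0 → R) := ⟨fun a b => funext fun i => i.elim0⟩
    haveI : Subsingleton ((Fin 0 → R) ⧸ (⊥ : Submodule R (Fin 0 → R))) :=
      Quotient.instSubsingletonQuotient _
    simp [Subsingleton.elim x 0]
  ρ := fun _ => LinearEquiv.refl _ _
  map_one := rfl
  lax := fun g h => ⟨fun x => ⟨0, by simp⟩, fun x _ => rfl⟩

lemma zObj_subsingleton : Subsingleton (zObj R π G).Mdl := by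
  haveI : Subsingleton (Fin (zObj R π G).n → R) := ⟨fun a b => funext fun i => i.elim0⟩
  exact Quotient.instSubsingletonQuotient _

lemma zObj_zero : (QuotientAddGroup.mk (FreeAbelianGroup.of (zObj R π G)) : LGroup R π G) = 0 := by
  haveI := zObj_subsingleton (R := R) (π := π) (G := G)
  have h : FreeAbelianGroup.of (zObj R π G) - FreeAbelianGroup.of (zObj R π G)
      - FreeAbelianGroup.of (zObj R π G) ∈ LRel R π G := by
    refine ⟨zObj R π G, zObj R π G, zObj R π G, LinearMap.id, LinearMap.id,
      fun x y _ => Subsingleton.elim x y, fun x => ⟨x, rfl⟩, ?_, fun _ => rfl, fun _ => rfl, rfl⟩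
    ext x
    simp [Subsingleton.elim x 0]
  have := relClass h
  rw [right_eq_add] at this
  exact this

/-- isomorphic objects have the same class -/
lemma isoClass {a b : LObj R π G} (e : a.Mdl ≃ₗ[R] b.Mdl)
    (he : ∀ g : G, e.toLinearMap ∘ₗ (a.ρ g : a.Mdl →ₗ[R] a.Mdl)
      = (b.ρ g : b.Mdl →ₗ[R] b.Mdl) ∘ₗ e.toLinearMap) :
    (QuotientAddGroup.mk (FreeAbelianGroup.of a) : LGroup R π G)
      = QuotientAddGroup.mk (FreeAbelianGroup.of b) := by
  haveI := zObj_subsingleton (R := R) (π := π) (G := G)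
  have h : FreeAbelianGroup.of a - FreeAbelianGroup.of (zObj R π G)
      - FreeAbelianGroup.of b ∈ LRel R π G := by
    refine ⟨zObj R π G, a, b, 0, e.toLinearMap,
      fun x y _ => Subsingleton.elim x y, e.surjective, ?_, fun g => ?_, he, rfl⟩
    · rw [LinearMap.range_zero, eq_comm, LinearMap.ker_eq_bot]
      exact e.injective
    · ext x
      simp
  have := relClass h
  rw [zObj_zero, zero_add] at this
  exact this

end Helpers
section Swindle

set_option linter.unusedSectionVars false
variable {R : Type} [CommRing R] [IsDomain R] [IsDiscreteValuationRing R]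
  {π : R} {G : Type} [Group G]

lemma pi_smul_zero {m : ℕ} : ∀ x : (Fin m → R) ⧸ prel R π m, π • x = 0 := by
  intro x
  obtain ⟨y, rfl⟩ := Submodule.Quotient.mk_surjective _ x
  rw [← Submodule.Quotient.mk_smul, Submodule.Quotient.mk_eq_zero]
  exact mem_prel.mpr ⟨y, rfl⟩

/-- the mod-`π` object attached to a strict representation on `(Fin m → R) ⧸ πR^m` -/
def kObj (π : R) (G : Type) [Group G] (m : ℕ)
    (σ : G → ((Fin m → R) ⧸ prel R π m) ≃ₗ[R] ((Fin m → R) ⧸ prel R π m))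
    (h1 : σ 1 = LinearEquiv.refl _ _)
    (hs : ∀ g h : G, σ (g * h) = (σ h).trans (σ g)) : LObj R π G where
  n := m
  rels := prel R π m
  tors := fun x _ => pi_smul_zero x
  ρ := σ
  map_one := h1
  lax := fun g h => ⟨fun x => ⟨0, by rw [hs g h]; simp⟩, fun x _ => by rw [hs g h]; rfl⟩

lemma bot_torsion_eq_zero (hπ : Irreducible π) {m : ℕ}
    {x : (Fin m → R) ⧸ (⊥ : Submodule R (Fin m → R))}
    (hx : x ∈ Submodule.torsion R ((Fin m → R) ⧸ (⊥ : Submodule R (Fin m → R)))) : x = 0 := by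
  obtain ⟨r, hr⟩ := hx
  obtain ⟨y, rfl⟩ := Submodule.Quotient.mk_surjective _ x
  rw [← Submodule.Quotient.mk_smul, Submodule.Quotient.mk_eq_zero, Submodule.mem_bot] at hr
  rw [Submodule.Quotient.mk_eq_zero, Submodule.mem_bot]
  funext i
  have : (r : R) * y i = 0 := congrFun hr i
  rcases mul_eq_zero.mp this with h | h
  · exact absurd h (nonZeroDivisors.ne_zero r.2)
  · exact h

/-- the free object attached to a lax representation on `Fin m → R` -/
@[reducible]
def frObj (π : R) (G : Type) [Group G] (m : ℕ)
    (τ : G → (Fin m → R) ≃ₗ[R] (Fin m → R))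
    (h1 : τ 1 = LinearEquiv.refl _ _)
    (hπ : Irreducible π)
    (hlax : ∀ (g h : G) (z : Fin m → R), ∃ w, τ (g * h) z - τ g (τ h z) = π • w) :
    LObj R π G where
  n := m
  rels := ⊥
  tors := fun x hx => by rw [bot_torsion_eq_zero hπ hx, smul_zero]
  ρ := fun g =>
    ((Submodule.quotEquivOfEqBot ⊥ rfl).trans (τ g)).trans (Submodule.quotEquivOfEqBot ⊥ rfl).symm
  map_one := by
    apply LinearEquiv.toLinearMap_injective
    ext x
    simp [h1]
  lax := fun g h => by
    constructor
    · intro x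
      set q := Submodule.quotEquivOfEqBot (⊥ : Submodule R (Fin m → R)) rfl with hq
      obtain ⟨w, hw⟩ := hlax g h (q x)
      refine ⟨q.symm w, ?_⟩
      simp only [LinearEquiv.coe_coe, LinearMap.coe_comp, Function.comp_apply,
        LinearEquiv.trans_apply, LinearEquiv.apply_symm_apply]
      rw [← map_sub, hw, map_smul]
    · intro x hx
      rw [bot_torsion_eq_zero hπ hx]
      simp

lemma lift_exists {m : ℕ} (u : ((Fin m → R) ⧸ prel R π m) ≃ₗ[R] ((Fin m → R) ⧸ prel R π m)) :
    ∃ a : (Fin m → R) →ₗ[R] (Fin m → R),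
      ∀ x, (Submodule.Quotient.mk (a x) : (Fin m → R) ⧸ prel R π m)
        = u (Submodule.Quotient.mk x) := by
  classical
  have hsurj := Submodule.Quotient.mk_surjective (prel R π m)
  choose c hc using fun i : Fin m => hsurj (u (Submodule.Quotient.mk (Pi.basisFun R (Fin m) i)))
  refine ⟨(Pi.basisFun R (Fin m)).constr R c, fun x => ?_⟩
  have : (prel R π m).mkQ ∘ₗ (Pi.basisFun R (Fin m)).constr R c
      = u.toLinearMap ∘ₗ (prel R π m).mkQ := by
    apply Module.Basis.ext (Pi.basisFun R (Fin m))
    intro i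
    simp only [LinearMap.coe_comp, Function.comp_apply, Module.Basis.constr_basis, Submodule.mkQ_apply,
      LinearEquiv.coe_coe]
    exact hc i
  have h2 := LinearMap.congr_fun this x
  simp only [LinearMap.coe_comp, Function.comp_apply, Submodule.mkQ_apply,
    LinearEquiv.coe_coe] at h2
  exact h2

lemma unit_det (hπ : Irreducible π) {m : ℕ} (a a' : (Fin m → R) →ₗ[R] (Fin m → R))
    (h : ∀ x, a (a' x) - x ∈ prel R π m) :
    IsUnit ((LinearMap.toMatrix (Pi.basisFun R (Fin m)) (Pi.basisFun R (Fin m))) a).det := by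
  classical
  set I : Ideal R := Ideal.span {π} with hI
  set bs := Pi.basisFun R (Fin m)
  set N := (LinearMap.toMatrix bs bs) a with hN
  set N' := (LinearMap.toMatrix bs bs) a' with hN'
  have hmap : (Ideal.Quotient.mk I).mapMatrix (N * N') = 1 := by
    have hNN' : N * N' = (LinearMap.toMatrix bs bs) (a ∘ₗ a') :=
      (LinearMap.toMatrix_comp bs bs bs a a').symm
    ext i j
    have hmem : (a (a' (bs j)) - bs j) i ∈ I := by
      have := h (bs j)
      exact Submodule.mem_pi.mp this i (Set.mem_univ i)
    have : (Ideal.Quotient.mk I) ((a (a' (bs j))) i) = (Ideal.Quotient.mk I) ((bs j : Fin m → R) i) := by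
      rw [Ideal.Quotient.eq]
      simpa using hmem
    simp only [RingHom.mapMatrix_apply, Matrix.map_apply, hNN', LinearMap.toMatrix_apply,
      LinearMap.coe_comp, Function.comp_apply]
    rw [Pi.basisFun_repr, this]
    by_cases hij : i = j <;>
      simp [bs, Pi.basisFun_apply, Pi.single_apply, Matrix.one_apply, hij]
  have hdetmul : (Ideal.Quotient.mk I) N.det * (Ideal.Quotient.mk I) N'.det = 1 := by
    rw [← map_mul, ← Matrix.det_mul, RingHom.map_det, hmap, Matrix.det_one]
  have hu : IsUnit ((Ideal.Quotient.mk I) N.det) := IsUnit.of_mul_eq_one _ hdetmul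
  by_contra hnu
  haveI : Nontrivial (R ⧸ I) := Ideal.Quotient.nontrivial_iff.mpr (Ideal.span_singleton_ne_top hπ.not_isUnit)
  have hmem : N.det ∈ I := by
    rw [hI, ← hπ.maximalIdeal_eq]
    exact (IsLocalRing.mem_maximalIdeal _).mpr hnu
  rw [Ideal.Quotient.eq_zero_iff_mem.mpr hmem] at hu
  exact not_isUnit_zero hu

end Swindle
section KZero

set_option linter.unusedSectionVars false
variable {R : Type} [CommRing R] [IsDomain R] [IsDiscreteValuationRing R]
  {π : R} {G : Type} [Group G]

lemma bot_pi_smul_eq_zero (hπ : Irreducible π) {m : ℕ}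
    (w : (Fin m → R) ⧸ (⊥ : Submodule R (Fin m → R))) (hw : π • w = 0) : w = 0 := by
  obtain ⟨z, rfl⟩ := Submodule.Quotient.mk_surjective _ w
  rw [← Submodule.Quotient.mk_smul, Submodule.Quotient.mk_eq_zero, Submodule.mem_bot] at hw
  rw [Submodule.Quotient.mk_eq_zero, Submodule.mem_bot]
  funext i
  have : π * z i = 0 := congrFun hw i
  rcases mul_eq_zero.mp this with h | h
  · exact absurd h hπ.ne_zero
  · exact h

lemma quotBot_symm_mk {m : ℕ} (w : Fin m → R) :
    (Submodule.quotEquivOfEqBot (⊥ : Submodule R (Fin m → R)) rfl).symm w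
      = Submodule.Quotient.mk w := by
  apply (Submodule.quotEquivOfEqBot (⊥ : Submodule R (Fin m → R)) rfl).injective
  rw [LinearEquiv.apply_symm_apply]
  rfl

lemma kZero (hπ : Irreducible π) (m : ℕ)
    (σ : G → ((Fin m → R) ⧸ prel R π m) ≃ₗ[R] ((Fin m → R) ⧸ prel R π m))
    (h1 : σ 1 = LinearEquiv.refl _ _)
    (hs : ∀ g h : G, σ (g * h) = (σ h).trans (σ g)) :
    (QuotientAddGroup.mk (FreeAbelianGroup.of (kObj π G m σ h1 hs)) : LGroup R π G) = 0 := by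
  classical
  -- choose lax lifts
  choose A hA using fun g : G => lift_exists (σ g)
  choose A' hA' using fun g : G => lift_exists (σ g).symm
  have hdet : ∀ g : G,
      IsUnit ((LinearMap.toMatrix (Pi.basisFun R (Fin m)) (Pi.basisFun R (Fin m))) (A g)).det := by
    intro g
    refine unit_det hπ (A g) (A' g) (fun x => ?_)
    have : (Submodule.Quotient.mk (A g (A' g x)) : (Fin m → R) ⧸ prel R π m)
        = Submodule.Quotient.mk x := by
      rw [hA, hA', LinearEquiv.apply_symm_apply]
    exact (Submodule.Quotient.eq _).mp this
  let τ : G → (Fin m → R) ≃ₗ[R] (Fin m → R) := fun g =>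
    if hg : g = 1 then LinearEquiv.refl R (Fin m → R) else LinearEquiv.ofIsUnitDet (hdet g)
  have hτ : ∀ (g : G) (x : Fin m → R),
      (Submodule.Quotient.mk (τ g x) : (Fin m → R) ⧸ prel R π m)
        = σ g (Submodule.Quotient.mk x) := by
    intro g x
    by_cases hg : g = 1
    · subst hg
      simp [τ, h1]
    · simp only [τ, dif_neg hg, LinearEquiv.ofIsUnitDet_apply]
      exact hA g x
  have hτ1 : τ 1 = LinearEquiv.refl R (Fin m → R) := by simp [τ]
  have hτlax : ∀ (g h : G) (z : Fin m → R), ∃ w, τ (g * h) z - τ g (τ h z) = π • w := by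
    intro g h z
    have : (Submodule.Quotient.mk (τ (g * h) z) : (Fin m → R) ⧸ prel R π m)
        = Submodule.Quotient.mk (τ g (τ h z)) := by
      rw [hτ, hτ, hτ, hs]
      rfl
    exact mem_prel.mp ((Submodule.Quotient.eq _).mp this)
  -- the short exact sequence  0 → F --π--> F → F/πF → 0
  let fr := frObj π G m τ hτ1 hπ hτlax
  have hrel : FreeAbelianGroup.of fr - FreeAbelianGroup.of fr
      - FreeAbelianGroup.of (kObj π G m σ h1 hs) ∈ LRel R π G := by
    refine ⟨fr, fr, kObj π G m σ h1 hs, π • LinearMap.id,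
      Submodule.mapQ ⊥ (prel R π m) LinearMap.id (bot_le (a := Submodule.comap LinearMap.id (prel R π m))), ?_, ?_, ?_, ?_, ?_, rfl⟩
    · -- injective
      intro x y hxy
      simp only [LinearMap.smul_apply, LinearMap.id_coe, id_eq] at hxy
      have h0 : π • (x - y) = 0 := by rw [smul_sub, hxy, sub_self]
      have := bot_pi_smul_eq_zero hπ _ h0
      exact sub_eq_zero.mp this
    · -- surjective
      intro y
      obtain ⟨z, rfl⟩ := Submodule.Quotient.mk_surjective (prel R π m) y
      refine ⟨(Submodule.Quotient.mk z : (Fin m → R) ⧸ (⊥ : Submodule R (Fin m → R))), ?_⟩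
      erw [Submodule.mapQ_apply]
      rfl
    · -- range = ker
      apply le_antisymm
      · rintro x ⟨y, rfl⟩
        obtain ⟨z, rfl⟩ := Submodule.Quotient.mk_surjective (⊥ : Submodule R (Fin m → R)) y
        refine LinearMap.mem_ker.mpr ?_
        have : (π • LinearMap.id : fr.Mdl →ₗ[R] fr.Mdl) (Submodule.Quotient.mk z)
            = Submodule.Quotient.mk (π • z) := by
          simp only [LinearMap.smul_apply, LinearMap.id_coe, id_eq]
          rw [Submodule.Quotient.mk_smul]
        erw [this]
        erw [Submodule.mapQ_apply]
        erw [Submodule.Quotient.mk_eq_zero]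
        exact mem_prel.mpr ⟨z, rfl⟩
      · intro x hx
        obtain ⟨z, rfl⟩ := Submodule.Quotient.mk_surjective (⊥ : Submodule R (Fin m → R)) x
        replace hx := LinearMap.mem_ker.mp hx
        erw [Submodule.mapQ_apply] at hx
        have hz : z ∈ prel R π m := (Submodule.Quotient.mk_eq_zero _).mp hx
        obtain ⟨w, hw⟩ := mem_prel.mp hz
        refine ⟨Submodule.Quotient.mk w, ?_⟩
        simp only [LinearMap.smul_apply, LinearMap.id_coe, id_eq]
        rw [← Submodule.Quotient.mk_smul, ← hw]
    · -- equivariance of f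
      intro g₀
      refine LinearMap.ext fun x => ?_
      simp only [LinearMap.coe_comp, Function.comp_apply, LinearMap.smul_apply,
        LinearMap.id_coe, id_eq, LinearEquiv.coe_coe, map_smul]
    · -- equivariance of g
      intro g₀
      refine LinearMap.ext fun x => ?_
      obtain ⟨z, rfl⟩ := Submodule.Quotient.mk_surjective (⊥ : Submodule R (Fin m → R)) x
      have hfr : (fr.ρ g₀) (Submodule.Quotient.mk z) = Submodule.Quotient.mk (τ g₀ z) := by
        show ((Submodule.quotEquivOfEqBot ⊥ rfl).trans (τ g₀)).trans
          (Submodule.quotEquivOfEqBot ⊥ rfl).symm (Submodule.Quotient.mk z)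
          = Submodule.Quotient.mk (τ g₀ z)
        rw [LinearEquiv.trans_apply, LinearEquiv.trans_apply, quotBot_symm_mk]
        congr 1
      erw [LinearMap.comp_apply, LinearMap.comp_apply]
      erw [hfr]
      erw [Submodule.mapQ_apply]
      exact hτ g₀ z
  have := relClass hrel
  rw [left_eq_add] at this
  exact this

end KZero
/-- Let `R` be a commutative discrete valuation ring with uniformizer
`π` and residue field `k = R/(π)`, and `G` a group.  For every finite dimensional
`k`-vector space `X` regarded as an `R`-module (i.e. a finitely generated `R`-module
with `π·X = 0`) and every genuine group homomorphism `ρ : G → Aut_k(X)`, the class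
`[(X, ρ)]` vanishes in `L`. -/
theorem stmt9 (R : Type) [CommRing R] [IsDomain R] [IsDiscreteValuationRing R]
    (π : R) (hπ : Irreducible π) (G : Type) [Group G] :
    ∀ o : LObj R π G,
      (∀ x : o.Mdl, π • x = 0) →
      (∀ g h : G, o.ρ (g * h) = (o.ρ h).trans (o.ρ g)) →
      (QuotientAddGroup.mk (FreeAbelianGroup.of o) : LGroup R π G) = 0 := by
  classical
  intro o H1 H2
  set I : Ideal R := Ideal.span {π} with hI
  haveI hfin : Module.Finite R o.Mdl :=
    Module.Finite.of_surjective o.rels.mkQ (Submodule.mkQ_surjective _)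
  have ht : Module.IsTorsionBySet R o.Mdl (I : Set R) :=
    (Module.isTorsionBySet_span_singleton_iff π).mpr H1
  letI : Module (R ⧸ I) o.Mdl := ht.module
  haveI : IsScalarTower R (R ⧸ I) o.Mdl := ht.isScalarTower
  haveI : Ideal.IsMaximal I := PrincipalIdealRing.isMaximal_of_irreducible hπ
  letI : Field (R ⧸ I) := Ideal.Quotient.field I
  haveI : Module.Finite (R ⧸ I) o.Mdl := by
    obtain ⟨S, hS⟩ := hfin
    refine ⟨⟨S, ?_⟩⟩
    rw [eq_top_iff]
    intro x _
    have hx : x ∈ Submodule.span R (S : Set o.Mdl) := by rw [hS]; trivial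
    exact Submodule.span_le_restrictScalars R (R ⧸ I) (S : Set o.Mdl) hx
  set m := Module.finrank (R ⧸ I) o.Mdl with hm
  let b : Module.Basis (Fin m) (R ⧸ I) o.Mdl := Module.finBasis _ _
  -- the presentation map  R^m → o.Mdl
  let φ : (Fin m → R) →ₗ[R] o.Mdl := Fintype.linearCombination R (fun i => b i)
  have hφ : ∀ x : Fin m → R, φ x = b.equivFun.symm (fun i => Ideal.Quotient.mk I (x i)) := by
    intro x
    rw [Module.Basis.equivFun_symm_apply]
    rw [show φ x = ∑ i, x i • b i from Fintype.linearCombination_apply R (fun i => b i) x]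
    exact Finset.sum_congr rfl fun i _ => (ht.mk_smul (x i) (b i)).symm
  have hφsurj : Function.Surjective φ := by
    intro y
    choose r hr using fun i : Fin m => Ideal.Quotient.mk_surjective (I := I) (b.equivFun y i)
    refine ⟨r, ?_⟩
    rw [hφ]
    have : (fun i => Ideal.Quotient.mk I (r i)) = b.equivFun y := funext hr
    rw [this, LinearEquiv.symm_apply_apply]
  have hker : LinearMap.ker φ = prel R π m := by
    ext x
    rw [LinearMap.mem_ker, hφ]
    rw [show ((0 : o.Mdl) = b.equivFun.symm 0) by simp]
    rw [(b.equivFun.symm.injective.eq_iff (a := fun i => Ideal.Quotient.mk I (x i)) (b := 0))]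
    constructor
    · intro h
      refine Submodule.mem_pi.mpr fun i _ => ?_
      have := congrFun h i
      exact Ideal.Quotient.eq_zero_iff_mem.mp this
    · intro h
      funext i
      exact Ideal.Quotient.eq_zero_iff_mem.mpr (Submodule.mem_pi.mp h i (Set.mem_univ i))
  -- the isomorphism  (Fin m → R) ⧸ prel ≃ o.Mdl
  have hle : prel R π m ≤ LinearMap.ker φ := le_of_eq hker.symm
  let ebar : ((Fin m → R) ⧸ prel R π m) →ₗ[R] o.Mdl := Submodule.liftQ _ φ hle
  have hebar : ∀ x : Fin m → R, ebar (Submodule.Quotient.mk x) = φ x := fun x =>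
    Submodule.liftQ_apply _ φ x
  have hbij : Function.Bijective ebar := by
    constructor
    · rw [← LinearMap.ker_eq_bot]
      exact Submodule.ker_liftQ_eq_bot _ φ hle (le_of_eq hker)
    · intro y
      obtain ⟨x, hx⟩ := hφsurj y
      exact ⟨Submodule.Quotient.mk x, by rw [hebar, hx]⟩
  let e : ((Fin m → R) ⧸ prel R π m) ≃ₗ[R] o.Mdl := LinearEquiv.ofBijective ebar hbij
  -- transported representation
  let σ : G → ((Fin m → R) ⧸ prel R π m) ≃ₗ[R] ((Fin m → R) ⧸ prel R π m) := fun g =>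
    (e.trans (o.ρ g)).trans e.symm
  have h1 : σ 1 = LinearEquiv.refl _ _ := by
    apply LinearEquiv.toLinearMap_injective
    ext x
    simp [σ, o.map_one]
  have hs : ∀ g h : G, σ (g * h) = (σ h).trans (σ g) := by
    intro g h
    apply LinearEquiv.toLinearMap_injective
    ext x
    simp only [σ, LinearEquiv.coe_coe, LinearMap.coe_comp, Function.comp_apply,
      LinearEquiv.trans_apply, LinearEquiv.apply_symm_apply, H2 g h]
  have hiso := isoClass (a := kObj π G m σ h1 hs) (b := o) e (fun g => by
    refine LinearMap.ext fun x => ?_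
    simp only [LinearMap.coe_comp, Function.comp_apply, LinearEquiv.coe_coe]
    show e ((σ g) x) = (o.ρ g) (e x)
    exact e.apply_symm_apply _)
  rw [← hiso]
  exact kZero hπ m σ h1 hs
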